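/- The Jacobian of G is tridiagonal: ∂G_j/∂a_k = 0 whenever |j - k| > 1, and for j ≠ n, ∂G_j/∂a_{j+1} = (r(a_{j+1})/q_j) (1 + (a_j - μ(θ̂_j))(a_{j+1} - μ(θ̂_j)) / μ'(θ̂_j)). -/

import Mathlib

open MeasureTheory Set

/-- FTC: derivative of `t ↦ ∫ x in Iic t, f x` at `t₀` is `f t₀`. -/
lemma ftc_Iic_aux {f : ℝ → ℝ} (hf : Continuous f) (hfi : Integrable f) (t₀ : ℝ) :
    HasDerivAt (fun t => ∫ x in Iic t, f x) (f t₀) t₀ := by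
  have key : ∀ t : ℝ, (∫ x in Iic t, f x) = (∫ x in Iic t₀, f x) + ∫ x in t₀..t, f x := by
    intro t
    have := intervalIntegral.integral_Iic_sub_Iic (μ := volume) (f := f) (a := t₀) (b := t)
      hfi.integrableOn hfi.integrableOn
    linarith
  have hd : HasDerivAt (fun t : ℝ => (∫ x in Iic t₀, f x) + ∫ x in t₀..t, f x) (f t₀) t₀ :=
    (intervalIntegral.integral_hasDerivAt_right hfi.intervalIntegrable
      (hf.stronglyMeasurableAtFilter _ _) hf.continuousAt).const_add _
  have : (fun t => ∫ x in Iic t, f x)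
      = fun t : ℝ => (∫ x in Iic t₀, f x) + ∫ x in t₀..t, f x := funext key
  rw [this]; exact hd

/-- Lemma 2, off-diagonal entries: the Jacobian of `G` is tridiagonal, i.e.
`∂G_j/∂a_k = 0` for `|j - k| > 1`, and for `j ≠ n`,
`∂G_j/∂a_{j+1} = (r(a_{j+1})/q_j)(1 + (a_j - μ(θ̂_j))(a_{j+1} - μ(θ̂_j))/μ'(θ̂_j))`. -/
theorem smml_G_jacobian_tridiagonal
    (n : ℕ) (hn : 1 ≤ n)
    (r : ℝ → ℝ) (hr : Continuous r) (hrpos : ∀ x, 0 < r x)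
    (hint : Integrable r) (hnorm : ∫ x, r x = 1)
    (hint1 : Integrable (fun x => x * r x))
    (ψ μ dμ : ℝ → ℝ) (hψ : ∀ θ, HasDerivAt ψ (μ θ) θ)
    (hμ : ∀ θ, HasDerivAt μ (dμ θ) θ) (hdμcont : Continuous dμ) (hdμpos : ∀ θ, 0 < dμ θ)
    (μinv : ℝ → ℝ) (hinvl : ∀ θ, μinv (μ θ) = θ) (hinvr : ∀ y, μ (μinv y) = y)
    (h : ℝ → ℝ) (hh : ∀ x, 0 < h x) (hhcont : Continuous h)
    (hinth : Integrable (fun x => r x * Real.log (h x)))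
    (F : ℝ → ℝ → ℝ) (hF : ∀ x θ, F x θ = Real.exp (x * θ - ψ θ) * h x)
    (C : ℝ) (hC : C = -∫ x, r x * Real.log (h x))
    (R : ℝ → ℝ) (hR : ∀ x, R x = ∫ t in Iic x, r t)
    (Q : (ℕ → ℝ) → ℕ → ℝ)
    (hQ : ∀ b i, Q b i = (if i = n then 1 else R (b (i + 1))) - (if i = 0 then 0 else R (b i)))
    (M : (ℕ → ℝ) → ℕ → ℝ)
    (hM : ∀ b i, M b i =
      (if i = n then ∫ t, t * r t else ∫ t in Iic (b (i + 1)), t * r t) -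
      (if i = 0 then 0 else ∫ t in Iic (b i), t * r t))
    (TH : (ℕ → ℝ) → ℕ → ℝ) (hTH : ∀ b i, TH b i = μinv (M b i / Q b i))
    (I1 : (ℕ → ℝ) → ℝ)
    (hI1 : ∀ b, I1 b = C - ∑ i ∈ Finset.range (n + 1),
      Q b i * (Real.log (Q b i) + TH b i * μ (TH b i) - ψ (TH b i)))
    (a : ℕ → ℝ) (ha : ∀ i j, 1 ≤ i → i < j → j ≤ n → a i < a j)
    (G : (ℕ → ℝ) → ℕ → ℝ)
    (hG : ∀ b j, G b j =
      (Real.log (Q b j) + b j * TH b j - ψ (TH b j)) -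
      (Real.log (Q b (j - 1)) + b j * TH b (j - 1) - ψ (TH b (j - 1))))
    (j : ℕ) (hj1 : 1 ≤ j) (hj2 : j ≤ n) :
    (∀ k, 1 ≤ k → k ≤ n → (k + 1 < j ∨ j + 1 < k) →
      HasDerivAt (fun t => G (Function.update a k t) j) 0 (a k)) ∧
    (j < n →
      HasDerivAt (fun t => G (Function.update a (j + 1) t) j)
        (r (a (j + 1)) / Q a j *
          (1 + (a j - μ (TH a j)) * (a (j + 1) - μ (TH a j)) / dμ (TH a j)))
        (a (j + 1))) := by
  constructor
  · -- far off-diagonal entries vanish: the map is constant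
    intro k hk1 hk2 hkj
    have hconst : ∀ t, G (Function.update a k t) j = G a j := by
      intro t
      have e1 : Function.update a k t (j + 1) = a (j + 1) :=
        Function.update_of_ne (by omega) _ _
      have e2 : Function.update a k t j = a j := Function.update_of_ne (by omega) _ _
      have e3 : Function.update a k t (j - 1) = a (j - 1) :=
        Function.update_of_ne (by omega) _ _
      have e4 : Function.update a k t (j - 1 + 1) = a (j - 1 + 1) :=
        Function.update_of_ne (by omega) _ _
      simp only [hG, hTH, hM, hQ, e1, e2, e3, e4]
    have hfun : (fun t => G (Function.update a k t) j) = fun _ => G a j := funext hconst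
    rw [hfun]
    exact hasDerivAt_const _ _
  · -- the superdiagonal entry
    intro hjn
    have hjn' : j ≠ n := Nat.ne_of_lt hjn
    have hj0 : j ≠ 0 := by omega
    have hjajn : a j < a (j + 1) := ha j (j + 1) hj1 (by omega) (by omega)
    -- μinv is continuous
    have hμmono : StrictMono μ := strictMono_of_deriv_pos fun x => by
      rw [(hμ x).deriv]; exact hdμpos x
    have hinvmono : StrictMono μinv := by
      intro y₁ y₂ hy
      by_contra hcon
      push_neg at hcon
      have : μ (μinv y₂) ≤ μ (μinv y₁) := hμmono.monotone hcon
      rw [hinvr, hinvr] at this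
      exact absurd hy (not_lt.mpr this)
    have hinvsurj : Function.Surjective μinv := fun θ => ⟨μ θ, hinvl θ⟩
    have hcontμinv : Continuous μinv := by
      have := (StrictMono.orderIsoOfSurjective μinv hinvmono hinvsurj).continuous
      rwa [StrictMono.coe_orderIsoOfSurjective] at this
    -- values of Q, M at a
    have hQa : Q a j = (∫ x in Iic (a (j + 1)), r x) - ∫ x in Iic (a j), r x := by
      rw [hQ, if_neg hjn', if_neg hj0, hR, hR]
    have hMa : M a j = (∫ x in Iic (a (j + 1)), x * r x) - ∫ x in Iic (a j), x * r x := by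
      rw [hM, if_neg hjn', if_neg hj0]
    have hq : 0 < Q a j := by
      rw [hQa, intervalIntegral.integral_Iic_sub_Iic hint.integrableOn hint.integrableOn]
      exact intervalIntegral.intervalIntegral_pos_of_pos hint.intervalIntegrable hrpos hjajn
    set t₀ := a (j + 1) with ht₀
    set q := Q a j with hqdef
    set m := M a j with hmdef
    -- derivatives of the numerator and denominator
    have hQt : HasDerivAt
        (fun t => (∫ x in Iic t, r x) - ∫ x in Iic (a j), r x) (r t₀) t₀ :=
      (ftc_Iic_aux hr hint t₀).sub_const _
    have hMt : HasDerivAt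
        (fun t => (∫ x in Iic t, x * r x) - ∫ x in Iic (a j), x * r x) (t₀ * r t₀) t₀ :=
      (ftc_Iic_aux (continuous_id.mul hr) hint1 t₀).sub_const _
    have hvq : ((∫ x in Iic t₀, r x) - ∫ x in Iic (a j), r x) = q := hQa.symm
    have hvm : ((∫ x in Iic t₀, x * r x) - ∫ x in Iic (a j), x * r x) = m := hMa.symm
    have hdiv : HasDerivAt
        (fun t => ((∫ x in Iic t, x * r x) - ∫ x in Iic (a j), x * r x) /
          ((∫ x in Iic t, r x) - ∫ x in Iic (a j), r x))
        ((t₀ * r t₀ * q - m * r t₀) / q ^ 2) t₀ := by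
      have := hMt.div hQt (by rw [hvq]; exact hq.ne')
      rwa [hvq, hvm] at this
    -- derivative of μinv at m / q
    have hμinv_d : HasDerivAt μinv (dμ (μinv (m / q)))⁻¹ (m / q) :=
      HasDerivAt.of_local_left_inverse hcontμinv.continuousAt (hμ _) (hdμpos _).ne'
        (Filter.Eventually.of_forall hinvr)
    have hθval : TH a j = μinv (m / q) := hTH a j
    have hμTH : μ (TH a j) = m / q := by rw [hθval, hinvr]
    -- derivative of θ(t)
    have hθd : HasDerivAt
        (fun t => μinv (((∫ x in Iic t, x * r x) - ∫ x in Iic (a j), x * r x) /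
          ((∫ x in Iic t, r x) - ∫ x in Iic (a j), r x)))
        ((dμ (TH a j))⁻¹ * ((t₀ * r t₀ * q - m * r t₀) / q ^ 2)) t₀ := by
      have hpt : (((∫ x in Iic t₀, x * r x) - ∫ x in Iic (a j), x * r x) /
          ((∫ x in Iic t₀, r x) - ∫ x in Iic (a j), r x)) = m / q := by rw [hvq, hvm]
      rw [← hθval] at hμinv_d
      rw [← hpt] at hμinv_d
      exact (HasDerivAt.comp t₀ hμinv_d hdiv)
    -- derivative of the log term
    have hlog : HasDerivAt
        (fun t => Real.log ((∫ x in Iic t, r x) - ∫ x in Iic (a j), r x))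
        (r t₀ / q) t₀ := by
      have := hQt.log (by rw [hvq]; exact hq.ne')
      rwa [hvq] at this
    -- derivative of the ψ term
    have hψd : HasDerivAt
        (fun t => ψ (μinv (((∫ x in Iic t, x * r x) - ∫ x in Iic (a j), x * r x) /
          ((∫ x in Iic t, r x) - ∫ x in Iic (a j), r x))))
        (μ (TH a j) * ((dμ (TH a j))⁻¹ * ((t₀ * r t₀ * q - m * r t₀) / q ^ 2))) t₀ := by
      have hpt : (((∫ x in Iic t₀, x * r x) - ∫ x in Iic (a j), x * r x) /
          ((∫ x in Iic t₀, r x) - ∫ x in Iic (a j), r x)) = m / q := by rw [hvq, hvm]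
      have hψ' : HasDerivAt ψ (μ (TH a j))
          (μinv (((∫ x in Iic t₀, x * r x) - ∫ x in Iic (a j), x * r x) /
            ((∫ x in Iic t₀, r x) - ∫ x in Iic (a j), r x))) := by
        rw [hpt, ← hθval]; exact hψ _
      exact HasDerivAt.comp t₀ hψ' hθd
    -- the whole map equals an explicit function of t
    have hGeq : ∀ t, G (Function.update a (j + 1) t) j =
        (Real.log ((∫ x in Iic t, r x) - ∫ x in Iic (a j), r x)
          + a j * μinv (((∫ x in Iic t, x * r x) - ∫ x in Iic (a j), x * r x) /
            ((∫ x in Iic t, r x) - ∫ x in Iic (a j), r x))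
          - ψ (μinv (((∫ x in Iic t, x * r x) - ∫ x in Iic (a j), x * r x) /
            ((∫ x in Iic t, r x) - ∫ x in Iic (a j), r x))))
        - (Real.log (Q a (j - 1)) + a j * TH a (j - 1) - ψ (TH a (j - 1))) := by
      intro t
      have e1 : Function.update a (j + 1) t (j + 1) = t := Function.update_self _ _ _
      have e2 : Function.update a (j + 1) t j = a j := Function.update_of_ne (by omega) _ _
      have e3 : Function.update a (j + 1) t (j - 1) = a (j - 1) :=
        Function.update_of_ne (by omega) _ _
      have e4 : Function.update a (j + 1) t (j - 1 + 1) = a (j - 1 + 1) :=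
        Function.update_of_ne (by omega) _ _
      have eQ1 : Q (Function.update a (j + 1) t) (j - 1) = Q a (j - 1) := by
        rw [hQ, hQ, e4, e3]
      have eM1 : M (Function.update a (j + 1) t) (j - 1) = M a (j - 1) := by
        rw [hM, hM, e4, e3]
      have eTH1 : TH (Function.update a (j + 1) t) (j - 1) = TH a (j - 1) := by
        rw [hTH, hTH, eQ1, eM1]
      rw [hG, eQ1, eTH1, e2, hTH, hQ, hM, if_neg hjn', if_neg hjn', if_neg hj0, if_neg hj0,
        e1, e2, hR, hR]
    have hfun : (fun t => G (Function.update a (j + 1) t) j) =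
        fun t =>
        (Real.log ((∫ x in Iic t, r x) - ∫ x in Iic (a j), r x)
          + a j * μinv (((∫ x in Iic t, x * r x) - ∫ x in Iic (a j), x * r x) /
            ((∫ x in Iic t, r x) - ∫ x in Iic (a j), r x))
          - ψ (μinv (((∫ x in Iic t, x * r x) - ∫ x in Iic (a j), x * r x) /
            ((∫ x in Iic t, r x) - ∫ x in Iic (a j), r x))))
        - (Real.log (Q a (j - 1)) + a j * TH a (j - 1) - ψ (TH a (j - 1))) := funext hGeq
    rw [hfun]
    have hder := ((hlog.add (hθd.const_mul (a j))).sub hψd).sub_const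
      (Real.log (Q a (j - 1)) + a j * TH a (j - 1) - ψ (TH a (j - 1)))
    convert hder using 1
    case e'_4 => rfl
    case e'_5 => rfl
    case e'_8 => rfl
    rw [hμTH]
    have hq0 : q ≠ 0 := hq.ne'
    have hdμ0 : dμ (TH a j) ≠ 0 := (hdμpos _).ne'
    field_simp
    ring
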